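/- For every convex body K ⊆ ℝⁿ, the function ε ↦ i(K,ε) is left-continuous on (0,∞): for every ε > 0 one has i(K,ε) = sup{ i(K,ε') : 0 < ε' < ε } (values in ℕ ∪ {∞}). -/

import Mathlib

open Metric Set
open scoped RealInnerProductSpace

/-- The quantified t-illumination number `i(K,ε)`: the least `m` for which there exist
unit vectors `r_1, …, r_m` such that every `x ∈ K` satisfies `x + ε • r_i ∈ K` for some `i`;
`∞` if no finite such family exists. -/
noncomputable def iq {n : ℕ} (K : Set (EuclideanSpace ℝ (Fin n))) (ε : ℝ) : ℕ∞ :=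
  sInf {m : ℕ∞ | ∃ s : Finset (EuclideanSpace ℝ (Fin n)), (s.card : ℕ∞) = m ∧
    (∀ r ∈ s, ‖r‖ = 1) ∧ ∀ x ∈ K, ∃ r ∈ s, x + ε • r ∈ K}

/-- The quantified illumination number `c(K,ε)`: the least `m` for which there exist
unit vectors `r_1, …, r_m` such that every `x ∈ K` satisfies `x + ε • r_i ∈ int K` for some `i`;
`∞` if no finite such family exists. -/
noncomputable def cq {n : ℕ} (K : Set (EuclideanSpace ℝ (Fin n))) (ε : ℝ) : ℕ∞ :=
  sInf {m : ℕ∞ | ∃ s : Finset (EuclideanSpace ℝ (Fin n)), (s.card : ℕ∞) = m ∧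
    (∀ r ∈ s, ‖r‖ = 1) ∧ ∀ x ∈ K, ∃ r ∈ s, x + ε • r ∈ interior K}

/-- `B(c, R)` is the circumball of `K`: a closed ball containing `K` of minimal radius. -/
def IsCircumball {n : ℕ} (K : Set (EuclideanSpace ℝ (Fin n)))
    (c : EuclideanSpace ℝ (Fin n)) (R : ℝ) : Prop :=
  K ⊆ closedBall c R ∧ ∀ (c' : EuclideanSpace ℝ (Fin n)) (R' : ℝ), K ⊆ closedBall c' R' → R ≤ R'

lemma illum_mono {n : ℕ} {K : Set (EuclideanSpace ℝ (Fin n))} (hKconv : Convex ℝ K)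
    {x r : EuclideanSpace ℝ (Fin n)} (hx : x ∈ K) {t t' : ℝ} (ht' : 0 ≤ t') (htt : t' ≤ t)
    (ht : 0 < t) (hxt : x + t • r ∈ K) : x + t' • r ∈ K := by
  have hd1 : t'/t ≤ 1 := (div_le_one ht).mpr htt
  have hd0 : 0 ≤ t'/t := div_nonneg ht' ht.le
  have key : (1 - t'/t) • x + (t'/t) • (x + t • r) = x + t' • r := by
    have h1 : (t'/t) • (t • r) = t' • r := by
      rw [smul_smul, div_mul_cancel₀ _ ht.ne']
    rw [smul_add, h1, sub_smul, one_smul]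
    abel
  have := hKconv hx hxt (by linarith : (0:ℝ) ≤ 1 - t'/t) hd0 (by ring)
  rwa [key] at this

/-- For every convex body `K ⊆ ℝⁿ`, the function `ε ↦ i(K,ε)` is left-continuous on `(0,∞)`:
for every `ε > 0`, `i(K,ε) = sup {i(K,ε') : 0 < ε' < ε}`. -/
theorem iq_left_continuous {n : ℕ} (K : Set (EuclideanSpace ℝ (Fin n)))
    (hKc : IsCompact K) (hKconv : Convex ℝ K) (hKint : (interior K).Nonempty)
    (ε : ℝ) (hε : 0 < ε) :
    iq K ε = ⨆ ε' ∈ Set.Ioo (0 : ℝ) ε, iq K ε' := by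
  classical
  obtain ⟨x₀, hx₀⟩ : K.Nonempty := hKint.mono interior_subset
  refine le_antisymm ?_ ?_
  swap
  · -- sup ≤ iq K ε
    refine iSup₂_le fun ε' hε' => sInf_le_sInf ?_
    rintro m ⟨s, hc, hu, hi⟩
    refine ⟨s, hc, hu, fun x hx => ?_⟩
    obtain ⟨r, hr, hxr⟩ := hi x hx
    exact ⟨r, hr, illum_mono hKconv hx hε'.1.le hε'.2.le hε hxr⟩
  -- hard direction
  set L := ⨆ ε' ∈ Set.Ioo (0 : ℝ) ε, iq K ε' with hL
  rcases eq_or_ne L ⊤ with hT | hT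
  · rw [hT]; exact le_top
  obtain ⟨m, hm⟩ := WithTop.ne_top_iff_exists.mp hT
  have hle : ∀ t ∈ Set.Ioo (0:ℝ) ε, iq K t ≤ (m : ℕ∞) := by
    intro t ht
    exact le_of_le_of_eq (le_iSup₂_of_le t ht le_rfl) hm.symm
  -- for each t in (0, ε) obtain a witnessing family, as a tuple Fin m → E
  have hwit : ∀ t ∈ Set.Ioo (0:ℝ) ε, ∃ v : Fin m → EuclideanSpace ℝ (Fin n),
      (∀ i, ‖v i‖ = 1) ∧ ∀ x ∈ K, ∃ i, x + t • v i ∈ K := by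
    intro t ht
    have hne : {m' : ℕ∞ | ∃ s : Finset (EuclideanSpace ℝ (Fin n)), (s.card : ℕ∞) = m' ∧
        (∀ r ∈ s, ‖r‖ = 1) ∧ ∀ x ∈ K, ∃ r ∈ s, x + t • r ∈ K}.Nonempty := by
      by_contra h
      rw [Set.not_nonempty_iff_eq_empty] at h
      have := hle t ht
      rw [iq, h, sInf_empty] at this
      exact (lt_irrefl _ (lt_of_le_of_lt this (WithTop.coe_lt_top m))).elim
    obtain ⟨s, hcard, hu, hi⟩ := csInf_mem hne
    have hsle : (s.card : ℕ∞) ≤ (m : ℕ∞) := by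
      rw [hcard]; exact hle t ht
    have hsle' : s.card ≤ m := by exact_mod_cast hsle
    -- s is nonempty since K is nonempty
    obtain ⟨r₀, hr₀⟩ : s.Nonempty := by
      obtain ⟨r, hr, -⟩ := hi x₀ hx₀
      exact ⟨r, hr⟩
    refine ⟨fun i => s.toList.getD i r₀, fun i => ?_, fun x hx => ?_⟩
    · show ‖s.toList.getD (i : ℕ) r₀‖ = 1
      rcases lt_or_ge (i : ℕ) s.toList.length with h | h
      · rw [List.getD_eq_getElem _ _ h]
        exact hu _ (Finset.mem_toList.mp (List.getElem_mem h))
      · rw [List.getD_eq_default _ _ h]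
        exact hu _ hr₀
    · obtain ⟨r, hr, hxr⟩ := hi x hx
      obtain ⟨j, hjl, hj⟩ := List.mem_iff_getElem.mp (Finset.mem_toList.mpr hr)
      have hjm : j < m := lt_of_lt_of_le (by simpa [Finset.length_toList] using hjl) hsle'
      refine ⟨⟨j, hjm⟩, ?_⟩
      show x + t • s.toList.getD j r₀ ∈ K
      rw [List.getD_eq_getElem _ _ hjl]
      simpa [hj] using hxr
  -- Fin m is nonempty
  have hmpos : 0 < m := by
    obtain ⟨v, -, hv⟩ := hwit (ε/2) ⟨by linarith, by linarith⟩
    obtain ⟨i, -⟩ := hv x₀ hx₀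
    exact Fin.pos i
  haveI : Nonempty (Fin m) := ⟨⟨0, hmpos⟩⟩
  -- the compactness argument
  set A : ↥(Set.Ico (ε/2) ε) → Set (Fin m → EuclideanSpace ℝ (Fin n)) :=
    fun t => {v | (∀ i, ‖v i‖ = 1) ∧ ∀ x ∈ K, ∃ i, x + (t : ℝ) • v i ∈ K} with hA
  haveI : Nonempty ↥(Set.Ico (ε/2) ε) := ⟨⟨ε/2, le_refl _, by linarith⟩⟩
  have hsub : ∀ t : ↥(Set.Ico (ε/2) ε), (t:ℝ) ∈ Set.Ioo (0:ℝ) ε :=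
    fun t => ⟨lt_of_lt_of_le (by linarith) t.2.1, t.2.2⟩
  have hAmono : ∀ (a b : ↥(Set.Ico (ε/2) ε)), (a:ℝ) ≤ (b:ℝ) → A b ⊆ A a := by
    intro a b hab v hv
    refine ⟨hv.1, fun x hx => ?_⟩
    obtain ⟨i, hi⟩ := hv.2 x hx
    exact ⟨i, illum_mono hKconv hx (hsub a).1.le hab (hsub b).1 hi⟩
  have hAdir : Directed (· ⊇ ·) A := by
    intro a b
    rcases le_total (a:ℝ) (b:ℝ) with h | h
    · exact ⟨b, hAmono a b h, subset_rfl⟩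
    · exact ⟨a, subset_rfl, hAmono b a h⟩
  have hAne : ∀ t : ↥(Set.Ico (ε/2) ε), (A t).Nonempty := by
    intro t
    obtain ⟨v, hv1, hv2⟩ := hwit (t:ℝ) (hsub t)
    exact ⟨v, hv1, hv2⟩
  have hAcl : ∀ t : ↥(Set.Ico (ε/2) ε), IsClosed (A t) := by
    intro t
    have h1 : IsClosed {v : Fin m → EuclideanSpace ℝ (Fin n) | ∀ i, ‖v i‖ = 1} := by
      have : {v : Fin m → EuclideanSpace ℝ (Fin n) | ∀ i, ‖v i‖ = 1}
          = ⋂ i, (fun v : Fin m → EuclideanSpace ℝ (Fin n) => ‖v i‖) ⁻¹' {1} := by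
        ext v; simp
      rw [this]
      exact isClosed_iInter fun i =>
        IsClosed.preimage ((continuous_apply i).norm) isClosed_singleton
    have h2 : IsClosed {v : Fin m → EuclideanSpace ℝ (Fin n) |
        ∀ x ∈ K, ∃ i, x + (t : ℝ) • v i ∈ K} := by
      have : {v : Fin m → EuclideanSpace ℝ (Fin n) | ∀ x ∈ K, ∃ i, x + (t:ℝ) • v i ∈ K}
          = ⋂ x ∈ K, ⋃ i : Fin m,
            (fun v : Fin m → EuclideanSpace ℝ (Fin n) => x + (t:ℝ) • v i) ⁻¹' K := by
        ext v; simp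
      rw [this]
      refine isClosed_biInter fun x hx => isClosed_iUnion_of_finite fun i =>
        IsClosed.preimage ?_ hKc.isClosed
      exact continuous_const.add ((continuous_apply i :
        Continuous fun v : Fin m → EuclideanSpace ℝ (Fin n) => v i).const_smul (t:ℝ))
    have : A t = _ ∩ _ := rfl
    exact h1.inter h2
  have hAcomp : ∀ t : ↥(Set.Ico (ε/2) ε), IsCompact (A t) := by
    intro t
    have hP : IsCompact {v : Fin m → EuclideanSpace ℝ (Fin n) | ∀ i, ‖v i‖ = 1} := by
      have : {v : Fin m → EuclideanSpace ℝ (Fin n) | ∀ i, ‖v i‖ = 1}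
          = Set.pi Set.univ (fun _ : Fin m => Metric.sphere (0 : EuclideanSpace ℝ (Fin n)) 1) := by
        ext v
        simp [Set.mem_pi, mem_sphere_iff_norm]
      rw [this]
      exact isCompact_univ_pi fun _ => isCompact_sphere 0 1
    exact hP.of_isClosed_subset (hAcl t) (fun v hv => hv.1)
  obtain ⟨v, hv⟩ := IsCompact.nonempty_iInter_of_directed_nonempty_isCompact_isClosed
    A hAdir hAne hAcomp hAcl
  simp only [Set.mem_iInter] at hv
  have hvunit : ∀ i, ‖v i‖ = 1 := (hv ⟨ε/2, le_refl _, by linarith⟩).1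
  -- final: v illuminates at ε itself
  have hfinal : ∀ x ∈ K, ∃ i, x + ε • v i ∈ K := by
    intro x hx
    by_contra hc
    push_neg at hc
    set C : Fin m → Set ℝ := fun i => {t | x + t • v i ∈ K} ∩ Set.Icc 0 ε with hC
    have hCcomp : ∀ i, IsCompact (C i) := by
      intro i
      exact IsCompact.inter_left isCompact_Icc
        (IsClosed.preimage (continuous_const.add (continuous_id.smul continuous_const))
          hKc.isClosed)
    have hCne : ∀ i, (C i).Nonempty := by
      intro i
      exact ⟨0, by simpa using hx, le_refl 0, hε.le⟩
    set g : Fin m → ℝ := fun i => sSup (C i) with hg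
    have hgmem : ∀ i, g i ∈ C i := fun i => (hCcomp i).sSup_mem (hCne i)
    have hglt : ∀ i, g i < ε := by
      intro i
      rcases lt_or_eq_of_le (hgmem i).2.2 with h | h
      · exact h
      · exact absurd (h ▸ (hgmem i).1) (hc i)
    set M : ℝ := Finset.univ.sup' Finset.univ_nonempty g with hM
    have hMlt : M < ε := (Finset.sup'_lt_iff _).mpr fun i _ => hglt i
    set t : ℝ := max (ε/2) ((M + ε)/2) with htdef
    have ht1 : ε/2 ≤ t := le_max_left _ _
    have ht2 : t < ε := max_lt (by linarith) (by linarith)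
    have htC : t ∈ Set.Ico (ε/2) ε := ⟨ht1, ht2⟩
    obtain ⟨i, hi⟩ := (hv ⟨t, htC⟩).2 x hx
    have htCi : t ∈ C i := ⟨hi, by constructor <;> [linarith; linarith]⟩
    have : t ≤ g i := le_csSup (hCcomp i).bddAbove htCi
    have hgM : g i ≤ M := Finset.le_sup' g (Finset.mem_univ i)
    have : t ≤ M := le_trans this hgM
    have : (M + ε)/2 ≤ M := le_trans (le_max_right _ _) this
    linarith
  -- conclude
  rw [← hm]
  have : iq K ε ≤ ((Finset.univ.image v).card : ℕ∞) := by
    apply sInf_le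
    refine ⟨Finset.univ.image v, rfl, ?_, ?_⟩
    · intro r hr
      obtain ⟨i, -, rfl⟩ := Finset.mem_image.mp hr
      exact hvunit i
    · intro x hx
      obtain ⟨i, hi⟩ := hfinal x hx
      exact ⟨v i, Finset.mem_image_of_mem v (Finset.mem_univ i), hi⟩
  refine le_trans this ?_
  have : (Finset.univ.image v).card ≤ m := by
    calc (Finset.univ.image v).card ≤ (Finset.univ : Finset (Fin m)).card :=
      Finset.card_image_le
    _ = m := by simp
  exact_mod_cast Nat.cast_le.mpr this
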